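/- arXiv:1902.00436 — 9 statements merged into one kernel-verified Lean document; each statement's English description precedes it below -/
import Mathlib

section
/- For the damped harmonic oscillator contact integrator defined by x_{j+1} = (1 - h^2/2) x_j + h(1 - h α) p_j and p_{j+1} = (1 - h α) p_j - (h/2)(x_{j+1} + x_j), the resulting sequence x satisfies the second-order difference equation (x_{j+1} - 2x_j + x_{j-1})/h^2 = -x_j - α((x_j - x_{j-1})/h - (h/2) x_j). -/
/-- The position-momentum formulation of the first-order contact
integrator for the damped harmonic oscillator satisfies the second-order
difference equation. -/
theorem stmt0 (h α : ℝ) (hh : 0 < h) (x p : ℕ → ℝ)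
    (hx : ∀ j : ℕ, x (j + 1) = (1 - h ^ 2 / 2) * x j + h * (1 - h * α) * p j)
    (hp : ∀ j : ℕ, p (j + 1) = (1 - h * α) * p j - h / 2 * (x (j + 1) + x j)) :
    ∀ j : ℕ, 1 ≤ j →
      (x (j + 1) - 2 * x j + x (j - 1)) / h ^ 2 =
        -x j - α * ((x j - x (j - 1)) / h - h / 2 * x j) := by
  intro j hj
  obtain ⟨k, rfl⟩ : ∃ k, j = k + 1 := ⟨j - 1, (Nat.succ_pred_eq_of_pos hj).symm⟩
  have e1 := hx k
  have e2 := hx (k + 1)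
  have e3 := hp k
  simp only [Nat.add_sub_cancel]
  have hne : h ≠ 0 := ne_of_gt hh
  have key : x (k + 1 + 1) = (2 - h ^ 2 + h ^ 3 * α / 2 - h * α) * x (k + 1)
      - (1 - h * α) * x k := by
    linear_combination e2 + h * (1 - h * α) * e3 - (1 - h * α) * e1
  rw [key]
  field_simp
  ring
end

section
/- If x : [0,T] → ℝⁿ is twice differentiable, z satisfies ż = L(x, ẋ, z) for a time-independent C¹ Lagrangian L, and x satisfies the generalized Euler-Lagrange equations ∂L/∂x - d/dt(∂L/∂ẋ) + (∂L/∂z)(∂L/∂ẋ) = 0, then the energy E(t) = (∂L/∂ẋ)(x,ẋ,z)·ẋ - L(x,ẋ,z) satisfies Ė = (∂L/∂z) E. -/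
/-- Along solutions of the generalized Euler-Lagrange equations
of Herglotz' variational principle for a time-independent C¹ Lagrangian
`L : ℝⁿ × ℝⁿ × ℝ → ℝ`, the energy `E = ∂L/∂ẋ · ẋ - L` satisfies
`Ė = (∂L/∂z) E`.  Partial derivatives in the `x`- and `ẋ`-slots are expressed
directionally via the Fréchet derivative; `D t u` is the time derivative of
`t ↦ (∂L/∂ẋ)(x t, ẋ t, z t) · u`. -/
theorem stmt2 (n : ℕ)
    (L : EuclideanSpace ℝ (Fin n) × EuclideanSpace ℝ (Fin n) × ℝ → ℝ)
    (hL : ContDiff ℝ 1 L)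
    (x x' x'' : ℝ → EuclideanSpace ℝ (Fin n)) (z : ℝ → ℝ)
    (hx : ∀ t, HasDerivAt x (x' t) t)
    (hx' : ∀ t, HasDerivAt x' (x'' t) t)
    (hz : ∀ t, HasDerivAt z (L (x t, x' t, z t)) t)
    (D : ℝ → EuclideanSpace ℝ (Fin n) → ℝ)
    (hD : ∀ (u : EuclideanSpace ℝ (Fin n)) (t : ℝ),
      HasDerivAt (fun s => fderiv ℝ L (x s, x' s, z s)
        ((0 : EuclideanSpace ℝ (Fin n)), u, (0 : ℝ))) (D t u) t)
    (hEL : ∀ (u : EuclideanSpace ℝ (Fin n)) (t : ℝ),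
      fderiv ℝ L (x t, x' t, z t) (u, (0 : EuclideanSpace ℝ (Fin n)), (0 : ℝ))
        - D t u
        + fderiv ℝ L (x t, x' t, z t)
            ((0 : EuclideanSpace ℝ (Fin n)), (0 : EuclideanSpace ℝ (Fin n)), (1 : ℝ))
          * fderiv ℝ L (x t, x' t, z t)
            ((0 : EuclideanSpace ℝ (Fin n)), u, (0 : ℝ)) = 0)
    (t : ℝ) :
    HasDerivAt
      (fun s => fderiv ℝ L (x s, x' s, z s)
          ((0 : EuclideanSpace ℝ (Fin n)), x' s, (0 : ℝ)) - L (x s, x' s, z s))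
      (fderiv ℝ L (x t, x' t, z t)
          ((0 : EuclideanSpace ℝ (Fin n)), (0 : EuclideanSpace ℝ (Fin n)), (1 : ℝ))
        * (fderiv ℝ L (x t, x' t, z t)
            ((0 : EuclideanSpace ℝ (Fin n)), x' t, (0 : ℝ)) - L (x t, x' t, z t))) t := by
  classical
  set e : Fin n → EuclideanSpace ℝ (Fin n) := fun i => EuclideanSpace.single i 1 with he
  have hbasis : ∀ v : EuclideanSpace ℝ (Fin n), ∑ i, v i • e i = v := by
    intro v
    have := (EuclideanSpace.basisFun (Fin n) ℝ).sum_repr v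
    simpa [he, EuclideanSpace.basisFun_apply, EuclideanSpace.basisFun_repr] using this
  have key2 : ∀ (T : (EuclideanSpace ℝ (Fin n) × EuclideanSpace ℝ (Fin n) × ℝ) →L[ℝ] ℝ)
      (v : EuclideanSpace ℝ (Fin n)), T (0, v, 0) = ∑ i, v i * T (0, e i, 0) := by
    intro T v
    have hv : ((0 : EuclideanSpace ℝ (Fin n)), v, (0 : ℝ))
        = ∑ i, v i • ((0 : EuclideanSpace ℝ (Fin n)), e i, (0 : ℝ)) := by
      rw [Prod.ext_iff]
      refine ⟨by simp [Prod.fst_sum], ?_⟩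
      rw [Prod.ext_iff]
      exact ⟨by simp [Prod.snd_sum, Prod.fst_sum, hbasis v], by simp [Prod.snd_sum]⟩
    rw [hv, map_sum]
    refine Finset.sum_congr rfl fun i _ => ?_
    rw [map_smul, smul_eq_mul]
  have key1 : ∀ (T : (EuclideanSpace ℝ (Fin n) × EuclideanSpace ℝ (Fin n) × ℝ) →L[ℝ] ℝ)
      (v : EuclideanSpace ℝ (Fin n)), T (v, 0, 0) = ∑ i, v i * T (e i, 0, 0) := by
    intro T v
    have hv : (v, (0 : EuclideanSpace ℝ (Fin n)), (0 : ℝ))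
        = ∑ i, v i • ((e i : EuclideanSpace ℝ (Fin n)), (0 : EuclideanSpace ℝ (Fin n)), (0 : ℝ)) := by
      rw [Prod.ext_iff]
      refine ⟨by simp [Prod.fst_sum, hbasis v], ?_⟩
      rw [Prod.ext_iff]
      exact ⟨by simp [Prod.snd_sum, Prod.fst_sum], by simp [Prod.snd_sum]⟩
    rw [hv, map_sum]
    refine Finset.sum_congr rfl fun i _ => ?_
    rw [map_smul, smul_eq_mul]
  have hp : ∀ s, HasDerivAt (fun s => (x s, x' s, z s))
      (x' s, x'' s, L (x s, x' s, z s)) s := fun s => (hx s).prodMk ((hx' s).prodMk (hz s))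
  have hLp : HasDerivAt (fun s => L (x s, x' s, z s))
      (fderiv ℝ L (x t, x' t, z t) (x' t, x'' t, L (x t, x' t, z t))) t :=
    ((hL.differentiable one_ne_zero _).hasFDerivAt).comp_hasDerivAt t (hp t)
  have hcoord : ∀ (i : Fin n), HasDerivAt (fun s => x' s i) (x'' t i) t := by
    intro i
    have := (EuclideanSpace.proj (𝕜 := ℝ) i).hasFDerivAt.comp_hasDerivAt t (hx' t)
    exact this
  have hf : HasDerivAt
      (fun s => ∑ i, (x' s i) * fderiv ℝ L (x s, x' s, z s) (0, e i, 0))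
      (∑ i, ((x'' t i) * fderiv ℝ L (x t, x' t, z t) (0, e i, 0)
        + (x' t i) * D t (e i))) t :=
    HasDerivAt.fun_sum fun i _ => (hcoord i).mul (hD (e i) t)
  have hE : HasDerivAt
      (fun s => fderiv ℝ L (x s, x' s, z s)
        ((0 : EuclideanSpace ℝ (Fin n)), x' s, (0 : ℝ)) - L (x s, x' s, z s))
      ((∑ i, ((x'' t i) * fderiv ℝ L (x t, x' t, z t) (0, e i, 0)
        + (x' t i) * D t (e i)))
        - fderiv ℝ L (x t, x' t, z t) (x' t, x'' t, L (x t, x' t, z t))) t := by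
    have h := hf.sub hLp
    have hfun : (fun s => fderiv ℝ L (x s, x' s, z s)
        ((0 : EuclideanSpace ℝ (Fin n)), x' s, (0 : ℝ)) - L (x s, x' s, z s))
        = (fun s => (∑ i, (x' s i) * fderiv ℝ L (x s, x' s, z s) (0, e i, 0))
            - L (x s, x' s, z s)) := by
      funext s
      rw [key2 _ (x' s)]
    rw [hfun]
    exact h
  set T := fderiv ℝ L (x t, x' t, z t) with hT
  have hDe : ∀ i : Fin n, D t (e i) = T (e i, 0, 0) + T (0, 0, 1) * T (0, e i, 0) := by
    intro i
    have h := hEL (e i) t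
    rw [← hT] at h
    linarith
  have hsplit : T (x' t, x'' t, L (x t, x' t, z t))
      = T (x' t, 0, 0) + T (0, x'' t, 0) + L (x t, x' t, z t) * T (0, 0, 1) := by
    have h : ((x' t : EuclideanSpace ℝ (Fin n)), (x'' t : EuclideanSpace ℝ (Fin n)),
          L (x t, x' t, z t))
        = (x' t, (0 : EuclideanSpace ℝ (Fin n)), (0 : ℝ))
          + ((0 : EuclideanSpace ℝ (Fin n)), x'' t, (0 : ℝ))
          + L (x t, x' t, z t) • ((0 : EuclideanSpace ℝ (Fin n)),
              (0 : EuclideanSpace ℝ (Fin n)), (1 : ℝ)) := by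
      simp [Prod.ext_iff]
    rw [h, map_add, map_add, map_smul, smul_eq_mul]
  have s1 : ∑ i, (x'' t i) * T (0, e i, 0) = T (0, x'' t, 0) := (key2 T (x'' t)).symm
  have s2 : ∑ i, (x' t i) * T (e i, 0, 0) = T (x' t, 0, 0) := (key1 T (x' t)).symm
  have s3 : ∑ i, (x' t i) * T (0, e i, 0) = T (0, x' t, 0) := (key2 T (x' t)).symm
  have hval : T (0, 0, 1) * (T (0, x' t, 0) - L (x t, x' t, z t))
      = (∑ i, ((x'' t i) * T (0, e i, 0) + (x' t i) * D t (e i)))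
        - T (x' t, x'' t, L (x t, x' t, z t)) := by
    have hsum : ∑ i, (x' t i) * D t (e i)
        = T (x' t, 0, 0) + T (0, 0, 1) * T (0, x' t, 0) := by
      have h1 : ∑ i, (x' t i) * D t (e i)
          = ∑ i, ((x' t i) * T (e i, 0, 0)
            + T (0, 0, 1) * ((x' t i) * T (0, e i, 0))) := by
        refine Finset.sum_congr rfl fun i _ => ?_
        rw [hDe i]; ring
      rw [h1, Finset.sum_add_distrib, s2, ← Finset.mul_sum, s3]
    rw [Finset.sum_add_distrib, s1, hsum, hsplit]
    ring
  rw [hval]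
  exact hE
end

section
/- Let L : ℝ² × ℝ² → ℝ be C¹ and h > 0 small enough that 1 - h D₄L ≠ 0 along the trajectory. A discrete curve (x_j, z_j) satisfying z_{j+1} - z_j = h L(x_j, x_{j+1}, z_j, z_{j+1}) satisfies the discrete Herglotz criticality condition ∂z_{j+1}/∂x_j = 0 for all interior j if and only if D₁L(x_j,x_{j+1},z_j,z_{j+1}) + D₂L(x_{j-1},x_j,z_{j-1},z_j) · (1 + h D₃L(x_j,x_{j+1},z_j,z_{j+1}))/(1 - h D₄L(x_{j-1},x_j,z_{j-1},z_j)) = 0. -/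
/-- discrete Herglotz criticality.  Fix interior data
`x_{j-1} = xm`, `x_{j+1} = xp`, `z_{j-1} = zm`; let `ζ s` and `ζ' s` be the
values of `z_j` and `z_{j+1}` determined implicitly by the relations
`z_{k+1} - z_k = h L(x_k, x_{k+1}, z_k, z_{k+1})` when `x_j` is varied to `s`.
Then `∂z_{j+1}/∂x_j = 0` at `s = x` iff the discrete generalized
Euler-Lagrange equation holds.  Partial derivatives `DᵢL` are directional
Fréchet derivatives along the standard basis of `ℝ⁴`. -/
theorem stmt6 (L : ℝ × ℝ × ℝ × ℝ → ℝ) (hL : ContDiff ℝ 1 L)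
    (h : ℝ) (hh : 0 < h) (xm x xp zm : ℝ)
    (ζ ζ' : ℝ → ℝ) (dζ dζ' : ℝ)
    (hζrec : ∀ s, ζ s - zm = h * L (xm, s, zm, ζ s))
    (hζ'rec : ∀ s, ζ' s - ζ s = h * L (s, xp, ζ s, ζ' s))
    (hdζ : HasDerivAt ζ dζ x) (hdζ' : HasDerivAt ζ' dζ' x)
    (hden1 : 1 - h * fderiv ℝ L (xm, x, zm, ζ x) (0, 0, 0, 1) ≠ 0)
    (hden2 : 1 - h * fderiv ℝ L (x, xp, ζ x, ζ' x) (0, 0, 0, 1) ≠ 0) :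
    dζ' = 0 ↔
      fderiv ℝ L (x, xp, ζ x, ζ' x) (1, 0, 0, 0)
        + fderiv ℝ L (xm, x, zm, ζ x) (0, 1, 0, 0)
          * (1 + h * fderiv ℝ L (x, xp, ζ x, ζ' x) (0, 0, 1, 0))
          / (1 - h * fderiv ℝ L (xm, x, zm, ζ x) (0, 0, 0, 1)) = 0 := by
  set F := fderiv ℝ L (xm, x, zm, ζ x) with hF
  set G := fderiv ℝ L (x, xp, ζ x, ζ' x) with hG
  have hF' : HasFDerivAt L F (xm, x, zm, ζ x) :=
    (hL.differentiable one_ne_zero (xm, x, zm, ζ x)).hasFDerivAt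
  have hG' : HasFDerivAt L G (x, xp, ζ x, ζ' x) :=
    (hL.differentiable one_ne_zero (x, xp, ζ x, ζ' x)).hasFDerivAt
  -- derivative of s ↦ L (xm, s, zm, ζ s)
  have hm1 : HasDerivAt (fun s => (xm, s, zm, ζ s) : ℝ → ℝ × ℝ × ℝ × ℝ)
      (0, 1, 0, dζ) x :=
    (hasDerivAt_const x xm).prodMk ((hasDerivAt_id x).prodMk
      ((hasDerivAt_const x zm).prodMk hdζ))
  have hL1 : HasDerivAt (fun s => L (xm, s, zm, ζ s)) (F (0, 1, 0, dζ)) x :=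
    hF'.comp_hasDerivAt x hm1
  have hm2 : HasDerivAt (fun s => (s, xp, ζ s, ζ' s) : ℝ → ℝ × ℝ × ℝ × ℝ)
      (1, 0, dζ, dζ') x :=
    (hasDerivAt_id x).prodMk ((hasDerivAt_const x xp).prodMk (hdζ.prodMk hdζ'))
  have hL2 : HasDerivAt (fun s => L (s, xp, ζ s, ζ' s)) (G (1, 0, dζ, dζ')) x :=
    hG'.comp_hasDerivAt x hm2
  -- Equation 1: dζ = h * F (0,1,0,dζ)
  have hζeq : ζ = fun s => zm + h * L (xm, s, zm, ζ s) := by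
    funext s; have := hζrec s; linarith
  have heq1 : dζ = h * F (0, 1, 0, dζ) := by
    have h1 : HasDerivAt (fun s => zm + h * L (xm, s, zm, ζ s))
        (h * F (0, 1, 0, dζ)) x := ((hL1.const_mul h).const_add zm)
    rw [← hζeq] at h1
    exact hdζ.unique h1
  -- Equation 2: dζ' - dζ = h * G (1,0,dζ,dζ')
  have heq2 : dζ' - dζ = h * G (1, 0, dζ, dζ') := by
    have h0 : HasDerivAt (fun s => ζ' s - ζ s - h * L (s, xp, ζ s, ζ' s))
        (dζ' - dζ - h * G (1, 0, dζ, dζ')) x :=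
      (hdζ'.sub hdζ).sub (hL2.const_mul h)
    have hzero : (fun s => ζ' s - ζ s - h * L (s, xp, ζ s, ζ' s)) = fun _ => (0:ℝ) := by
      funext s; have := hζ'rec s; linarith
    rw [hzero] at h0
    have := h0.unique (hasDerivAt_const x 0)
    linarith
  -- Linearity decompositions
  have hFlin : F (0, 1, 0, dζ) = F (0, 1, 0, 0) + dζ * F (0, 0, 0, 1) := by
    have : ((0, 1, 0, dζ) : ℝ × ℝ × ℝ × ℝ) = (0, 1, 0, 0) + dζ • (0, 0, 0, 1) := by
      simp [Prod.ext_iff]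
    rw [this, map_add, map_smul, smul_eq_mul]
  have hGlin : G (1, 0, dζ, dζ') = G (1, 0, 0, 0) + dζ * G (0, 0, 1, 0)
      + dζ' * G (0, 0, 0, 1) := by
    have : ((1, 0, dζ, dζ') : ℝ × ℝ × ℝ × ℝ)
        = (1, 0, 0, 0) + dζ • (0, 0, 1, 0) + dζ' • (0, 0, 0, 1) := by
      simp [Prod.ext_iff]
    rw [this, map_add, map_add, map_smul, map_smul, smul_eq_mul, smul_eq_mul]
  rw [hFlin] at heq1
  rw [hGlin] at heq2
  set a := F (0, 1, 0, 0)
  set b := F (0, 0, 0, 1)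
  set c := G (1, 0, 0, 0)
  set d := G (0, 0, 1, 0)
  set e := G (0, 0, 0, 1)
  have e1 : dζ * (1 - h * b) = h * a := by linear_combination heq1
  have e2 : dζ' * (1 - h * e) = h * c + dζ * (1 + h * d) := by linear_combination heq2
  constructor
  · intro h0
    subst h0
    have e2' : h * c + dζ * (1 + h * d) = 0 := by linarith [e2]
    have hk : h * (c * (1 - h * b) + a * (1 + h * d)) = 0 := by
      linear_combination (1 - h * b) * e2' - (1 + h * d) * e1
    have hkey : c * (1 - h * b) + a * (1 + h * d) = 0 :=
      (mul_eq_zero.mp hk).resolve_left hh.ne'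
    field_simp
    linear_combination hkey
  · intro hEL
    have h3 : (c + a * (1 + h * d) / (1 - h * b)) * (1 - h * b) = 0 := by
      rw [hEL]; ring
    rw [add_mul, div_mul_cancel₀ _ hden1] at h3
    have hk : dζ' * ((1 - h * e) * (1 - h * b)) = 0 := by
      linear_combination (1 - h * b) * e2 + (1 + h * d) * e1 + h * h3
    exact (mul_eq_zero.mp hk).resolve_right (mul_ne_zero hden2 hden1)
end

section
/- Suppose a discrete curve (x_j, z_j) satisfies z_{j+1} - z_j = h L(x_j, x_{j+1}, z_j, z_{j+1}) and the discrete generalized Euler-Lagrange equations. Define p_j = h D₂L(x_{j-1},x_j,z_{j-1},z_j)/(1 - h D₄L(x_{j-1},x_j,z_{j-1},z_j)). Then dz_{j+1} - p_{j+1} dx_{j+1} = λ_j (dz_j - p_j dx_j), where λ_j = (1 + h D₃L(x_j,x_{j+1},z_j,z_{j+1}))/(1 - h D₄L(x_j,x_{j+1},z_j,z_{j+1})). In particular, the discrete flow map (x_j, p_j, z_j) ↦ (x_{j+1}, p_{j+1}, z_{j+1}) is a contact transformation for the 1-form dz - p dx. -/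
/-- the discrete contact flow is a contact transformation.
Consider a one-parameter family of discrete solutions: `a s = x_j(s)`,
`b s = x_{j+1}(s)`, `u s = z_j(s)`, `v s = z_{j+1}(s)` with
`z_{j+1} - z_j = h L(x_j, x_{j+1}, z_j, z_{j+1})`, the previous step having
values `x0 = x_{j-1}`, `z0 = z_{j-1}` at the base parameter `s0`, and the
discrete generalized Euler-Lagrange equation holding at `s0`.  Then the
variations (differentials) satisfy
`δz_{j+1} - p_{j+1} δx_{j+1} = λ_j (δz_j - p_j δx_j)` with
`p_k = h D₂L/(1 - h D₄L)` and `λ_j = (1 + h D₃L)/(1 - h D₄L)`. -/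
theorem stmt7 (L : ℝ × ℝ × ℝ × ℝ → ℝ) (hL : ContDiff ℝ 1 L)
    (h : ℝ) (hh : 0 < h) (x0 z0 : ℝ)
    (a b u v : ℝ → ℝ) (s0 δa δb δu δv : ℝ)
    (hrec : ∀ s, v s - u s = h * L (a s, b s, u s, v s))
    (hprev : u s0 - z0 = h * L (x0, a s0, z0, u s0))
    (hda : HasDerivAt a δa s0) (hdb : HasDerivAt b δb s0)
    (hdu : HasDerivAt u δu s0) (hdv : HasDerivAt v δv s0)
    (hden0 : 1 - h * fderiv ℝ L (x0, a s0, z0, u s0) (0, 0, 0, 1) ≠ 0)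
    (hden1 : 1 - h * fderiv ℝ L (a s0, b s0, u s0, v s0) (0, 0, 0, 1) ≠ 0)
    (hEL : fderiv ℝ L (a s0, b s0, u s0, v s0) (1, 0, 0, 0)
        + fderiv ℝ L (x0, a s0, z0, u s0) (0, 1, 0, 0)
          * (1 + h * fderiv ℝ L (a s0, b s0, u s0, v s0) (0, 0, 1, 0))
          / (1 - h * fderiv ℝ L (x0, a s0, z0, u s0) (0, 0, 0, 1)) = 0) :
    δv - (h * fderiv ℝ L (a s0, b s0, u s0, v s0) (0, 1, 0, 0)
            / (1 - h * fderiv ℝ L (a s0, b s0, u s0, v s0) (0, 0, 0, 1))) * δb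
      = ((1 + h * fderiv ℝ L (a s0, b s0, u s0, v s0) (0, 0, 1, 0))
            / (1 - h * fderiv ℝ L (a s0, b s0, u s0, v s0) (0, 0, 0, 1)))
        * (δu - (h * fderiv ℝ L (x0, a s0, z0, u s0) (0, 1, 0, 0)
            / (1 - h * fderiv ℝ L (x0, a s0, z0, u s0) (0, 0, 0, 1))) * δa) := by

  set P1 := (a s0, b s0, u s0, v s0) with hP1
  have hγ : HasDerivAt (fun s => (a s, b s, u s, v s)) (δa, δb, δu, δv) s0 :=
    hda.prodMk (hdb.prodMk (hdu.prodMk hdv))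
  have hF : HasFDerivAt L (fderiv ℝ L P1) P1 :=
    (hL.differentiable one_ne_zero P1).hasFDerivAt
  have hcomp : HasDerivAt (fun s => L (a s, b s, u s, v s))
      (fderiv ℝ L P1 (δa, δb, δu, δv)) s0 := hF.comp_hasDerivAt s0 hγ
  have hlhs : HasDerivAt (fun s => v s - u s) (δv - δu) s0 := hdv.sub hdu
  have hfun : (fun s => v s - u s) = (fun s => h * L (a s, b s, u s, v s)) :=
    funext fun s => hrec s
  have hrhs : HasDerivAt (fun s => v s - u s)
      (h * fderiv ℝ L P1 (δa, δb, δu, δv)) s0 := by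
    rw [hfun]; exact hcomp.const_mul h
  have key : δv - δu = h * fderiv ℝ L P1 (δa, δb, δu, δv) := hlhs.unique hrhs
  have hdec : (δa, δb, δu, δv) = δa • ((1:ℝ),(0:ℝ),(0:ℝ),(0:ℝ)) + δb • (0,1,0,0)
      + δu • (0,0,1,0) + δv • (0,0,0,1) := by
    simp [Prod.ext_iff]
  rw [hdec, map_add, map_add, map_add, map_smul, map_smul, map_smul, map_smul,
    smul_eq_mul, smul_eq_mul, smul_eq_mul, smul_eq_mul] at key
  set A := fderiv ℝ L P1 (1, 0, 0, 0)
  set B := fderiv ℝ L P1 (0, 1, 0, 0)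
  set C := fderiv ℝ L P1 (0, 0, 1, 0)
  set D := fderiv ℝ L P1 (0, 0, 0, 1)
  set B' := fderiv ℝ L (x0, a s0, z0, u s0) (0, 1, 0, 0)
  set D' := fderiv ℝ L (x0, a s0, z0, u s0) (0, 0, 0, 1)
  have hEL' : A * (1 - h * D') + B' * (1 + h * C) = 0 := by
    field_simp at hEL; linarith [hEL]
  field_simp
  linear_combination (1 - h*D') * key + h * δa * hEL'
end

section
/- For the discrete Lagrangian L(x₀,x₁,z₀,z₁) = ½((x₁-x₀)/h)² - (V(x₀)+V(x₁))/2 - αz₀, the discrete generalized Euler-Lagrange equation is equivalent to (x_{j+1} - 2x_j + x_{j-1})/h² = -V'(x_j) - α((x_j - x_{j-1})/h - (h/2)V'(x_j)). -/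
noncomputable def L9 (V : ℝ → ℝ) (α h : ℝ) (q : ℝ × ℝ × ℝ × ℝ) : ℝ :=
  (1 / 2) * ((q.2.1 - q.1) / h) ^ 2 - (V q.1 + V q.2.1) / 2 - α * q.2.2.1

lemma L9_fderiv (V : ℝ → ℝ) (hV : Differentiable ℝ V) (α h : ℝ)
    (a b c d u v w s : ℝ) :
    fderiv ℝ (L9 V α h) (a, b, c, d) (u, v, w, s)
      = ((b - a) / h ^ 2) * (v - u) - (deriv V a * u + deriv V b * v) / 2 - α * w := by
  set P1 : (ℝ × ℝ × ℝ × ℝ) →L[ℝ] ℝ := ContinuousLinearMap.fst ℝ ℝ (ℝ × ℝ × ℝ) with hP1def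
  set P2 : (ℝ × ℝ × ℝ × ℝ) →L[ℝ] ℝ :=
    (ContinuousLinearMap.fst ℝ ℝ (ℝ × ℝ)).comp (ContinuousLinearMap.snd ℝ ℝ (ℝ × ℝ × ℝ)) with hP2def
  set P3 : (ℝ × ℝ × ℝ × ℝ) →L[ℝ] ℝ :=
    ((ContinuousLinearMap.fst ℝ ℝ ℝ).comp (ContinuousLinearMap.snd ℝ ℝ (ℝ × ℝ))).comp
      (ContinuousLinearMap.snd ℝ ℝ (ℝ × ℝ × ℝ)) with hP3def
  have hP1 : ∀ p : ℝ × ℝ × ℝ × ℝ, HasFDerivAt (fun q : ℝ × ℝ × ℝ × ℝ => q.1) P1 p :=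
    fun p => P1.hasFDerivAt
  have hP2 : ∀ p : ℝ × ℝ × ℝ × ℝ, HasFDerivAt (fun q : ℝ × ℝ × ℝ × ℝ => q.2.1) P2 p :=
    fun p => P2.hasFDerivAt
  have hP3 : ∀ p : ℝ × ℝ × ℝ × ℝ, HasFDerivAt (fun q : ℝ × ℝ × ℝ × ℝ => q.2.2.1) P3 p :=
    fun p => P3.hasFDerivAt
  have h1 : HasFDerivAt (fun q : ℝ × ℝ × ℝ × ℝ => (1 / 2) * ((q.2.1 - q.1) / h) ^ 2)
      ((((b - a) / h ^ 2)) • (P2 - P1)) (a, b, c, d) := by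
    have hg : HasFDerivAt (fun q : ℝ × ℝ × ℝ × ℝ => q.2.1 - q.1) (P2 - P1) (a, b, c, d) :=
      (hP2 _).sub (hP1 _)
    have hφ : HasDerivAt (fun t : ℝ => (1 / 2) * (t / h) ^ 2) ((b - a) / h ^ 2) (b - a) := by
      have : HasDerivAt (fun t : ℝ => (1 / 2) * (t / h) ^ 2)
          ((1 / 2) * (2 * ((b - a) / h) ^ 1 * (1 / h))) (b - a) :=
        (((hasDerivAt_id (b - a)).div_const h).pow 2).const_mul (1 / 2)
      convert this using 1
      field_simp
    exact HasDerivAt.comp_hasFDerivAt (h₂ := fun t : ℝ => (1 / 2) * (t / h) ^ 2)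
      (f := fun q : ℝ × ℝ × ℝ × ℝ => q.2.1 - q.1) (a, b, c, d) hφ hg
  have h2 : HasFDerivAt (fun q : ℝ × ℝ × ℝ × ℝ => (V q.1 + V q.2.1) / 2)
      ((1 / 2 : ℝ) • (deriv V a • P1 + deriv V b • P2)) (a, b, c, d) := by
    have hVa : HasDerivAt V (deriv V a) a := (hV a).hasDerivAt
    have hVb : HasDerivAt V (deriv V b) b := (hV b).hasDerivAt
    have hsum : HasFDerivAt (fun q : ℝ × ℝ × ℝ × ℝ => V q.1 + V q.2.1)
        (deriv V a • P1 + deriv V b • P2) (a, b, c, d) :=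
      (hVa.comp_hasFDerivAt (a, b, c, d) (hP1 _)).add
        (hVb.comp_hasFDerivAt (a, b, c, d) (hP2 _))
    have hφ : HasDerivAt (fun t : ℝ => t / 2) ((1 : ℝ) / 2) (V a + V b) :=
      (hasDerivAt_id (V a + V b)).div_const 2
    exact hφ.comp_hasFDerivAt (a, b, c, d) hsum
  have h3 : HasFDerivAt (fun q : ℝ × ℝ × ℝ × ℝ => α * q.2.2.1) (α • P3) (a, b, c, d) :=
    (hP3 (a, b, c, d)).const_mul α
  have hL : HasFDerivAt (L9 V α h)
      ((((b - a) / h ^ 2)) • (P2 - P1) - (1 / 2 : ℝ) • (deriv V a • P1 + deriv V b • P2)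
        - α • P3) (a, b, c, d) := by
    unfold L9
    exact (h1.sub h2).sub h3
  rw [hL.fderiv]
  simp [hP1def, hP2def, hP3def]
  ring

/-- for the discrete Lagrangian `L9`, the discrete generalized
Euler-Lagrange equation is equivalent to
`(x_{j+1} - 2x_j + x_{j-1})/h² = -V'(x_j) - α((x_j - x_{j-1})/h - (h/2)V'(x_j))`. -/
theorem stmt9 (V : ℝ → ℝ) (hV : Differentiable ℝ V) (α h : ℝ) (hh : 0 < h)
    (xm x xp zm z zp : ℝ) :
    (fderiv ℝ (L9 V α h) (x, xp, z, zp) (1, 0, 0, 0)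
        + fderiv ℝ (L9 V α h) (xm, x, zm, z) (0, 1, 0, 0)
          * (1 + h * fderiv ℝ (L9 V α h) (x, xp, z, zp) (0, 0, 1, 0))
          / (1 - h * fderiv ℝ (L9 V α h) (xm, x, zm, z) (0, 0, 0, 1)) = 0) ↔
      (xp - 2 * x + xm) / h ^ 2
        = -deriv V x - α * ((x - xm) / h - h / 2 * deriv V x) := by
  have hne : h ≠ 0 := hh.ne'
  simp only [L9_fderiv V hV α h]
  constructor <;> intro H <;> field_simp at H ⊢
  · refine mul_left_cancel₀ hne ?_
    linear_combination (-1 / 2) * H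
  · linear_combination (-2 * h) * H
end

section
/- For the symmetric contact integrator of the damped system, on solutions of the discrete generalized Euler-Lagrange equation (1 + hα/2)(x_{j+1} - 2x_j + x_{j-1}) = -h²V'(x_j) - hα(x_j - x_{j-1}), the two momenta p_j⁻ = ((x_j - x_{j-1})/h - (h/2)V'(x_j))/(1 + hα/2) and p_j⁺ = ((x_{j+1} - x_j)/h + (h/2)V'(x_j))/(1 - hα/2) both equal (x_{j+1} - x_{j-1})/(2h). -/
/-- on solutions of the discrete generalized Euler-Lagrange
equation of the symmetric contact integrator, the two discrete momenta
`p_j⁻` and `p_j⁺` both equal `(x_{j+1} - x_{j-1})/(2h)`. -/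
theorem stmt12 (V : ℝ → ℝ) (hV : Differentiable ℝ V) (α h : ℝ) (hh : 0 < h)
    (h1 : 1 + h * α / 2 ≠ 0) (h2 : 1 - h * α / 2 ≠ 0) (xm x xp : ℝ)
    (hEL : (1 + h * α / 2) * (xp - 2 * x + xm)
      = -h ^ 2 * deriv V x - h * α * (x - xm)) :
    ((x - xm) / h - h / 2 * deriv V x) / (1 + h * α / 2) = (xp - xm) / (2 * h) ∧
    ((xp - x) / h + h / 2 * deriv V x) / (1 - h * α / 2) = (xp - xm) / (2 * h) := by
  have hne : h ≠ 0 := ne_of_gt hh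
  have h1' : 2 + h * α ≠ 0 := by intro hc; apply h1; linarith
  have h2' : 2 - h * α ≠ 0 := by intro hc; apply h2; linarith
  constructor
  · field_simp [hne, h1', h2']
    linear_combination (-2) * hEL
  · field_simp [hne, h1', h2']
    linear_combination 2 * hEL
end

section
/- The explicit map x_j = x_{j-1} + h(1 - hα/2)p_{j-1} - (h²/2)V'(x_{j-1}), p_j = ((1 - hα/2)p_{j-1} - (h/2)(V'(x_j) + V'(x_{j-1})))/(1 + hα/2) generates sequences satisfying the difference equation (1 + hα/2)(x_{j+1} - 2x_j + x_{j-1}) = -h²V'(x_j) - hα(x_j - x_{j-1}). -/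
/-- the explicit position-momentum update of the second-order
contact variational integrator generates sequences satisfying the second-order
difference equation `(1 + hα/2)(x_{j+1} - 2x_j + x_{j-1}) = -h²V'(x_j) - hα(x_j - x_{j-1})`. -/
theorem stmt13 (V : ℝ → ℝ) (hV : Differentiable ℝ V) (α h : ℝ) (hh : 0 < h)
    (hden : 1 + h * α / 2 ≠ 0) (x p : ℕ → ℝ)
    (hx : ∀ j : ℕ, x (j + 1)
      = x j + h * (1 - h * α / 2) * p j - h ^ 2 / 2 * deriv V (x j))
    (hp : ∀ j : ℕ, p (j + 1)
      = ((1 - h * α / 2) * p j - h / 2 * (deriv V (x (j + 1)) + deriv V (x j)))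
        / (1 + h * α / 2)) :
    ∀ j : ℕ, 1 ≤ j →
      (1 + h * α / 2) * (x (j + 1) - 2 * x j + x (j - 1))
        = -h ^ 2 * deriv V (x j) - h * α * (x j - x (j - 1)) := by
  intro j hj
  obtain ⟨k, rfl⟩ := Nat.exists_eq_add_of_le hj
  simp only [Nat.add_sub_cancel_left] at *
  have B' := hp k
  rw [eq_div_iff hden] at B'
  have hA := hx (k + 1)
  have hC := hx k
  have e1 : 1 + k = k + 1 := by ring
  rw [e1] at *
  linear_combination (1 + h * α / 2) * hA + h * (1 - h * α / 2) * B'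
    - (1 - h * α / 2) * hC
end

section
/- Let S(x₀, x₁, z₀) generate a contact map via p₀ = -(∂S/∂z₀)⁻¹ ∂S/∂x₀, p₁ = ∂S/∂x₁, z₁ = S(x₀,x₁,z₀), and set L(x₀,x₁,z₀) = (S(x₀,x₁,z₀) - z₀)/h. Then any discrete curve (x_j, z_j) obtained by iterating this contact map satisfies z_{j+1} - z_j = h L(x_j, x_{j+1}, z_j) and the criticality condition ∂z_{j+1}/∂x_j = D₁S(x_j,x_{j+1},z_j) + D₃S(x_j,x_{j+1},z_j)·D₂S(x_{j-1},x_j,z_{j-1}) = 0. -/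
/-- iterations of the contact map generated by
`S(x₀, x₁, z₀)` (via `p₀ = -(D₃S)⁻¹D₁S`, `p₁ = D₂S`, `z₁ = S`) solve the
discrete Herglotz variational principle for the discrete Lagrangian
`L(x₀,x₁,z₀) = (S(x₀,x₁,z₀) - z₀)/h`: they satisfy
`z_{j+1} - z_j = h L(x_j, x_{j+1}, z_j)` and the criticality condition
`∂z_{j+1}/∂x_j = D₁S(x_j,x_{j+1},z_j) + D₃S(x_j,x_{j+1},z_j) D₂S(x_{j-1},x_j,z_{j-1}) = 0`. -/
theorem stmt15 (S : ℝ × ℝ × ℝ → ℝ) (hS : ContDiff ℝ 1 S)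
    (h : ℝ) (hh : 0 < h)
    (hD3 : ∀ q : ℝ × ℝ × ℝ, fderiv ℝ S q (0, 0, 1) ≠ 0)
    (x z p : ℕ → ℝ)
    (hz : ∀ j : ℕ, z (j + 1) = S (x j, x (j + 1), z j))
    (hp1 : ∀ j : ℕ, p j
      = -fderiv ℝ S (x j, x (j + 1), z j) (1, 0, 0)
        / fderiv ℝ S (x j, x (j + 1), z j) (0, 0, 1))
    (hp2 : ∀ j : ℕ, 1 ≤ j →
      p j = fderiv ℝ S (x (j - 1), x j, z (j - 1)) (0, 1, 0)) :
    (∀ j : ℕ, z (j + 1) - z j = h * ((S (x j, x (j + 1), z j) - z j) / h)) ∧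
    (∀ j : ℕ, 1 ≤ j →
      fderiv ℝ S (x j, x (j + 1), z j) (1, 0, 0)
        + fderiv ℝ S (x j, x (j + 1), z j) (0, 0, 1)
          * fderiv ℝ S (x (j - 1), x j, z (j - 1)) (0, 1, 0) = 0) := by
  constructor
  · intro j
    rw [mul_div_cancel₀ _ (ne_of_gt hh), hz j]
  · intro j hj
    have e := (hp1 j).symm.trans (hp2 j hj)
    have hd := hD3 (x j, x (j+1), z j)
    rw [div_eq_iff hd] at e
    linarith [e, mul_comm ((fderiv ℝ S (x (j - 1), x j, z (j - 1))) (0, 1, 0)) ((fderiv ℝ S (x j, x (j+1), z j)) (0, 0, 1))]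
end

section
/- For the forced damped oscillator integrator, the explicit update x_j = x_{j-1} + h(1 - hα/2)p_{j-1} - (h²/2)V'(x_{j-1}) + (h²/2)f(t_{j-1}), p_j = ((1 - hα/2)p_{j-1} - (h/2)(V'(x_j)+V'(x_{j-1})) + (h/2)(f(t_j)+f(t_{j-1})))/(1 + hα/2) generates x satisfying (x_{j+1} - 2x_j + x_{j-1})/h² = -V'(x_j) + f(t_j) - (α/(1+hα/2))((x_j - x_{j-1})/h - (h/2)V'(x_j) + (h/2)f(t_j)). -/
/-- the explicit position-momentum update of the time-dependent
contact variational integrator for the forced damped oscillator generates a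
sequence `x` satisfying the stated second-order difference equation, where
`t_j = t₀ + jh`. -/
theorem stmt19 (V f : ℝ → ℝ) (hV : Differentiable ℝ V) (α h t0 : ℝ)
    (hh : 0 < h) (hden : 1 + h * α / 2 ≠ 0) (x p : ℕ → ℝ)
    (hx : ∀ j : ℕ, x (j + 1)
      = x j + h * (1 - h * α / 2) * p j - h ^ 2 / 2 * deriv V (x j)
        + h ^ 2 / 2 * f (t0 + j * h))
    (hp : ∀ j : ℕ, p (j + 1)
      = ((1 - h * α / 2) * p j - h / 2 * (deriv V (x (j + 1)) + deriv V (x j))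
          + h / 2 * (f (t0 + (j + 1) * h) + f (t0 + j * h)))
        / (1 + h * α / 2)) :
    ∀ j : ℕ, 1 ≤ j →
      (x (j + 1) - 2 * x j + x (j - 1)) / h ^ 2
        = -deriv V (x j) + f (t0 + j * h)
          - α / (1 + h * α / 2)
            * ((x j - x (j - 1)) / h - h / 2 * deriv V (x j)
               + h / 2 * f (t0 + j * h)) := by
  intro j hj
  obtain ⟨k, rfl⟩ := Nat.exists_eq_add_of_le hj
  simp only [Nat.add_sub_cancel_left] at *
  rw [Nat.add_comm 1 k]
  have hne : h ≠ 0 := ne_of_gt hh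
  have h1 := hx k
  have h2 := hx (k + 1)
  have h3 := hp k
  rw [eq_div_iff hden] at h3
  push_cast at h1 h2 h3 ⊢
  have key : (1 + h * α / 2) * (x (k + 1 + 1) - 2 * x (k + 1) + x k)
      = (1 + h * α / 2) * h ^ 2 * (-deriv V (x (k + 1)) + f (t0 + (↑k + 1) * h))
        - α * h * ((x (k + 1) - x k) - h ^ 2 / 2 * deriv V (x (k + 1))
          + h ^ 2 / 2 * f (t0 + (↑k + 1) * h)) := by
    linear_combination (1 + h * α / 2) * h2 + h * (1 - h * α / 2) * h3
      - (1 - h * α / 2) * h1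
  have h2α : (2 : ℝ) + h * α ≠ 0 := by
    intro hc
    apply hden
    linarith
  generalize f (t0 + (↑k + 1) * h) = F at key ⊢
  field_simp [h2α]
  linear_combination 2 * key
end
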